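/- Let R be an integral domain, G a finite group, and φ : G → R^× a group homomorphism with kernel N. Then R_φ is a direct summand of a permutation RG-module if and only if the index [G:N] is a unit in R. -/

import Mathlib

/-- The ideal `I^φ_H = {r ∈ R : (1 - φ(h))·r = 0 for all h ∈ H}`, the annihilator of
`{1 - φ(h) : h ∈ H}`. -/
def Iphi {R : Type*} [CommRing R] {G : Type*} [Group G] (φ : G →* Rˣ) (H : Subgroup G) :
    Ideal R where
  carrier := {r : R | ∀ h ∈ H, (1 - ((φ h : Rˣ) : R)) * r = 0}
  add_mem' := by
    intro a b ha hb h hh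
    rw [mul_add, ha h hh, hb h hh, add_zero]
  zero_mem' := by intro h hh; rw [mul_zero]
  smul_mem' := by
    intro c r hr h hh
    simp only [smul_eq_mul]
    rw [mul_comm c r, ← mul_assoc, hr h hh, zero_mul]

/-- `R_φ` is a direct summand of a permutation `RG`-module: there are finitely many
subgroups `H i` of `G`, `RG`-module maps `f i : R_φ → R(G/H i)` (encoded by the images
`x i` of `1 ∈ R_φ`, which must be `φ`-semi-invariant) and `RG`-module maps
`g i : R(G/H i) → R_φ` (i.e. `R`-linear maps satisfying `g (s • m) = φ(s)·g m`) whose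
composite `∑ i, g i ∘ f i` is the identity of `R_φ`. -/
def IsPermSummand (R : Type*) [CommRing R] (G : Type*) [Group G] (φ : G →* Rˣ) : Prop :=
  ∃ (n : ℕ) (Hs : Fin n → Subgroup G)
    (x : ∀ i, MonoidAlgebra R (G ⧸ Hs i))
    (g : ∀ i, (MonoidAlgebra R (G ⧸ Hs i)) →ₗ[R] R),
    (∀ i (s : G), (Representation.ofMulAction R G (G ⧸ Hs i)) s (x i) = ((φ s : Rˣ) : R) • x i) ∧
    (∀ i (s : G) (m : MonoidAlgebra R (G ⧸ Hs i)),
      g i ((Representation.ofMulAction R G (G ⧸ Hs i)) s m) = ((φ s : Rˣ) : R) * g i m) ∧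
    (∑ i, g i (x i)) = 1

section Aux

variable {R : Type*} [CommRing R] {G : Type*} [Group G]

lemma finsupp_eq_sum_single (H : Subgroup G) [Fintype (G ⧸ H)] (m : MonoidAlgebra R (G ⧸ H)) :
    m = ∑ c : G ⧸ H, MonoidAlgebra.single c (m.coeff c) := by
  ext d
  rw [MonoidAlgebra.coeff_sum]
  simp only [MonoidAlgebra.coeff_single]
  rw [Finsupp.finset_sum_apply, Finset.sum_eq_single d (fun c _ hc => Finsupp.single_eq_of_ne' hc)
    (fun h => absurd (Finset.mem_univ d) h)]
  rw [Finsupp.single_eq_same]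

end Aux

theorem stmt6' (R : Type*) [CommRing R] [IsDomain R] (G : Type*) [Group G] [Finite G]
    (φ : G →* Rˣ) :
    (∃ (n : ℕ) (Hs : Fin n → Subgroup G)
      (x : ∀ i, MonoidAlgebra R (G ⧸ Hs i))
      (g : ∀ i, (MonoidAlgebra R (G ⧸ Hs i)) →ₗ[R] R),
      (∀ i (s : G), (Representation.ofMulAction R G (G ⧸ Hs i)) s (x i) = ((φ s : Rˣ) : R) • x i) ∧
      (∀ i (s : G) (m : MonoidAlgebra R (G ⧸ Hs i)),
        g i ((Representation.ofMulAction R G (G ⧸ Hs i)) s m) = ((φ s : Rˣ) : R) * g i m) ∧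
      (∑ i, g i (x i)) = 1) ↔ IsUnit (((φ.ker.index : ℕ) : R)) := by
  classical
  constructor
  · rintro ⟨n, Hs, x, g, hx, hg, hsum⟩
    refine isUnit_of_dvd_one ?_
    rw [← hsum]
    refine Finset.dvd_sum fun i _ => ?_
    haveI : Fintype (G ⧸ Hs i) := Fintype.ofFinite _
    set H := Hs i with hH
    set a : R := g i (MonoidAlgebra.single ((1 : G) : G ⧸ H) 1) with ha
    set b : R := (x i).coeff ((1 : G) : G ⧸ H) with hb
    have hA : ∀ t : G, g i (MonoidAlgebra.single ((t : G ⧸ H)) 1) = ((φ t : Rˣ) : R) * a := by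
      intro t
      have h1 : (MonoidAlgebra.single ((t : G ⧸ H)) (1 : R))
          = (Representation.ofMulAction R G (G ⧸ H)) t (MonoidAlgebra.single ((1 : G) : G ⧸ H) 1) := by
        rw [Representation.ofMulAction_single, MulAction.Quotient.smul_mk, smul_eq_mul, mul_one]
      rw [h1, hg]
    have hB : ∀ t : G, ((φ t : Rˣ) : R) * ((x i).coeff ((t : G ⧸ H))) = b := by
      intro t
      have h1 := congrArg (fun m : MonoidAlgebra R (G ⧸ H) => m.coeff ((t : G ⧸ H))) (hx i t)
      simp only [MonoidAlgebra.coeff_smul, Finsupp.smul_apply, smul_eq_mul] at h1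
      rw [← h1, Representation.coeff_ofMulAction, MulAction.Quotient.smul_mk, smul_eq_mul,
        inv_mul_cancel]
    have key : g i (x i) = ((H.index : ℕ) : R) * (b * a) := by
      conv_lhs => rw [finsupp_eq_sum_single H (x i)]
      rw [map_sum]
      have hterm : ∀ c : G ⧸ H, g i (MonoidAlgebra.single c ((x i).coeff c)) = b * a := by
        intro c
        obtain ⟨t, rfl⟩ := QuotientGroup.mk_surjective c
        have h4 : MonoidAlgebra.single ((t : G ⧸ H)) ((x i).coeff ((t : G ⧸ H)))
            = ((x i).coeff ((t : G ⧸ H))) • MonoidAlgebra.single ((t : G ⧸ H)) (1 : R) := by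
          rw [MonoidAlgebra.smul_single, smul_eq_mul, mul_one]
        rw [h4, map_smul, smul_eq_mul, hA t]
        calc (x i).coeff ((t : G ⧸ H)) * (((φ t : Rˣ) : R) * a)
            = (((φ t : Rˣ) : R) * (x i).coeff ((t : G ⧸ H))) * a := by ring
          _ = b * a := by rw [hB t]
      rw [Finset.sum_congr rfl fun c _ => hterm c, Finset.sum_const, Finset.card_univ,
        nsmul_eq_mul]
      congr 2
      rw [Subgroup.index, Nat.card_eq_fintype_card]
    rw [key]
    by_cases hHN : H ≤ φ.ker
    · exact Dvd.dvd.mul_right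
        (Nat.cast_dvd_cast (Subgroup.index_dvd_of_le hHN)) _
    · obtain ⟨h, hhH, hhN⟩ := SetLike.not_le_iff_exists.mp hHN
      have hφh : ((φ h : Rˣ) : R) ≠ 1 := by
        intro hc
        refine hhN ?_
        show h ∈ φ.ker
        rw [MonoidHom.mem_ker]
        exact Units.ext hc
      have ha0 : a = 0 := by
        have h5 : ((h : G ⧸ H)) = ((1 : G) : G ⧸ H) := by
          rw [QuotientGroup.eq]
          simpa using H.inv_mem hhH
        have h6 := hA h
        rw [h5] at h6
        have h7 : (1 - ((φ h : Rˣ) : R)) * a = 0 := by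
          rw [sub_mul, one_mul, sub_eq_zero]
          conv_lhs => rw [ha]
          exact h6
        rcases mul_eq_zero.mp h7 with h8 | h8
        · exact absurd (by linear_combination -h8) hφh
        · exact h8
      rw [ha0, mul_zero, mul_zero]
      exact dvd_zero _
  · intro hu
    haveI : Fintype (G ⧸ φ.ker) := Fintype.ofFinite _
    set N := φ.ker with hN
    set ψ := QuotientGroup.kerLift φ with hψdef
    obtain ⟨u, hu⟩ := hu
    set X : MonoidAlgebra R (G ⧸ N) := ∑ c : G ⧸ N, MonoidAlgebra.single c (((ψ c)⁻¹ : Rˣ) : R) with hX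
    have hψ : ∀ (s : G) (c : G ⧸ N), ψ (s • c) = φ s * ψ c := by
      intro s c
      induction c using QuotientGroup.induction_on with
      | H t =>
        rw [MulAction.Quotient.smul_mk, smul_eq_mul]
        rw [hψdef, QuotientGroup.kerLift_mk, QuotientGroup.kerLift_mk, map_mul]
    have hXinv : ∀ s : G, (Representation.ofMulAction R G (G ⧸ N)) s X
        = ((φ s : Rˣ) : R) • X := by
      intro s
      rw [hX, map_sum, Finset.smul_sum]
      rw [← Equiv.sum_comp (MulAction.toPerm s)
        (fun c => ((φ s : Rˣ) : R) • MonoidAlgebra.single c (((ψ c)⁻¹ : Rˣ) : R))]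
      simp only [MulAction.toPerm_apply]
      refine Finset.sum_congr rfl fun c _ => ?_
      rw [Representation.ofMulAction_single]
      rw [MonoidAlgebra.smul_single, smul_eq_mul]
      congr 1
      rw [hψ s c, mul_inv_rev, Units.val_mul,
        mul_comm ((((ψ c)⁻¹ : Rˣ)) : R), ← mul_assoc, Units.mul_inv, one_mul]
    refine ⟨1, fun _ => N, fun _ => ((u⁻¹ : Rˣ) : R) • X,
      fun _ => (Finsupp.linearCombination R (fun c : G ⧸ N => ((ψ c : Rˣ) : R))).comp
        (MonoidAlgebra.coeffLinearEquiv R).toLinearMap, ?_, ?_, ?_⟩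
    · intro i s
      rw [map_smul, hXinv s, smul_comm]
    · intro i s m
      change Finsupp.linearCombination R (fun c : G ⧸ N => ((ψ c : Rˣ) : R))
          (Finsupp.mapDomain (s • ·) m.coeff)
        = ((φ s : Rˣ) : R) * Finsupp.linearCombination R (fun c : G ⧸ N => ((ψ c : Rˣ) : R)) m.coeff
      rw [Finsupp.linearCombination_mapDomain]
      rw [Finsupp.linearCombination_apply, Finsupp.linearCombination_apply, Finsupp.mul_sum]
      refine Finsupp.sum_congr fun c _ => ?_
      show m.coeff c • ((ψ (s • c) : Rˣ) : R) = _
      rw [hψ s c]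
      push_cast
      rw [smul_eq_mul, smul_eq_mul]
      ring
    · rw [Fin.sum_univ_one, map_smul, smul_eq_mul, hX, map_sum]
      have h3 : ∀ c : G ⧸ N, ((fun _ : Fin 1 =>
          (Finsupp.linearCombination R (fun c : G ⧸ N => ((ψ c : Rˣ) : R))).comp
            (MonoidAlgebra.coeffLinearEquiv R).toLinearMap) 0)
          (MonoidAlgebra.single c (((ψ c)⁻¹ : Rˣ) : R)) = 1 := by
        intro c
        change Finsupp.linearCombination R (fun c : G ⧸ N => ((ψ c : Rˣ) : R))
          (Finsupp.single c (((ψ c)⁻¹ : Rˣ) : R)) = 1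
        rw [Finsupp.linearCombination_single, smul_eq_mul]
        exact_mod_cast Units.inv_mul (ψ c)
      rw [Finset.sum_congr rfl fun c _ => h3 c, Finset.sum_const, nsmul_eq_mul, mul_one]
      have h4 : ((Fintype.card (G ⧸ N) : ℕ) : R) = (u : R) := by
        rw [hu]
        rw [Subgroup.index, Nat.card_eq_fintype_card]
      rw [Finset.card_univ, h4]
      exact_mod_cast Units.inv_mul u

/-- over an integral domain `R`, `R_φ` is a direct summand of a permutation
`RG`-module if and only if the index of `N = ker φ` in `G` is a unit in `R`. -/
theorem stmt6 (R : Type*) [CommRing R] [IsDomain R] (G : Type*) [Group G] [Finite G]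
    (φ : G →* Rˣ) :
    IsPermSummand R G φ ↔ IsUnit (((φ.ker.index : ℕ) : R)) :=
  stmt6' R G φ
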